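/- Let G be a complete Hausdorff topological abelian group, ι an index set, and f : ι → G a summable family whose sum a is nonzero. Then there exists a nonempty subset Ω' ⊆ ι such that the restriction of f to Ω' is summable with sum a, and this sum is reduced: for every nonempty subset S ⊆ Ω', the subsum ∑_{i∈S} f(i) (which converges, since subfamilies of a summable family in a complete group are summable) is nonzero. -/

import Mathlib

open Filter Set Topology

/-- The union of a nonempty chain of zero-sum subsets is a zero-sum subset. -/
lemma chain_sUnion_hasSum_zero
    {G : Type*} [AddCommGroup G] [UniformSpace G] [IsUniformAddGroup G]
    [CompleteSpace G]
    {ι : Type*} {f : ι → G} (hf : Summable f)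
    {c : Set (Set ι)} (hc : IsChain (· ⊆ ·) c) (hne : c.Nonempty)
    (hz : ∀ s ∈ c, HasSum (f ∘ ((↑) : s → ι)) 0) :
    HasSum (f ∘ ((↑) : (⋃₀ c) → ι)) 0 := by
  classical
  set S : Set ι := ⋃₀ c with hS
  rw [hasSum_subtype_iff_indicator]
  show Tendsto (fun t : Finset ι => ∑ i ∈ t, S.indicator f i) atTop (𝓝 0)
  rw [tendsto_def]
  intro U hU
  obtain ⟨V, hV, hVU⟩ := exists_nhds_zero_half hU
  obtain ⟨s, hs⟩ := summable_iff_vanishing.1 hf V hV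
  -- find a member of the chain containing the finite set s ∩ S
  have hsub : ((s.filter (· ∈ S) : Finset ι) : Set ι) ⊆ ⋃ m ∈ c, m := by
    intro i hi
    simp only [Finset.coe_filter, Set.mem_setOf_eq] at hi
    exact (Set.mem_sUnion.1 hi.2).elim fun m hm => Set.mem_biUnion hm.1 hm.2
  obtain ⟨m, hmc, hm⟩ :=
    hc.directedOn.exists_mem_subset_of_finset_subset_biUnion hne hsub
  have hmS : m ⊆ S := fun i hi => Set.mem_sUnion.2 ⟨m, hmc, hi⟩
  -- the sum over m is 0; get a threshold finset for V
  have hzm : HasSum (m.indicator f) 0 := (hasSum_subtype_iff_indicator).1 (hz m hmc)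
  have h2 : ∀ᶠ t : Finset ι in atTop, ∑ i ∈ t, m.indicator f i ∈ V :=
    hzm (by simpa using hV)
  obtain ⟨s₂, hs₂⟩ := eventually_atTop.1 h2
  rw [mem_atTop_sets]
  refine ⟨s ∪ s₂, fun t ht => ?_⟩
  have hts : s ⊆ t := le_trans le_sup_left ht
  have hts₂ : s₂ ⊆ t := le_trans le_sup_right ht
  have hsplit : ∀ i, S.indicator f i = m.indicator f i + (S \ m).indicator f i := by
    intro i
    by_cases him : i ∈ m
    · have hiS : i ∈ S := hmS him
      simp [Set.indicator_apply, him, hiS]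
    · by_cases hiS : i ∈ S <;> simp [Set.indicator_apply, him, hiS]
  have key : ∑ i ∈ t, S.indicator f i
      = (∑ i ∈ t, m.indicator f i) + ∑ i ∈ t, (S \ m).indicator f i := by
    rw [← Finset.sum_add_distrib]
    exact Finset.sum_congr rfl fun i _ => hsplit i
  have h₁ : ∑ i ∈ t, m.indicator f i ∈ V := hs₂ t hts₂
  have h₂ : ∑ i ∈ t, (S \ m).indicator f i ∈ V := by
    have : ∑ i ∈ t, (S \ m).indicator f i = ∑ i ∈ t.filter (· ∈ S \ m), f i := by
      simpa using Finset.sum_indicator_eq_sum_filter t (fun _ j => f j) (fun _ => S \ m) id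
    rw [this]
    refine hs _ ?_
    rw [Finset.disjoint_left]
    intro i hi his
    rw [Finset.mem_filter] at hi
    have : i ∈ m := hm (by simp [his, hi.2.1])
    exact hi.2.2 this
  show ∑ i ∈ t, S.indicator f i ∈ U
  rw [key]
  exact hVU _ h₁ _ h₂

/-- Let `G` be a complete Hausdorff topological abelian group, `ι` an index
set, and `f : ι → G` a summable family with nonzero sum `a`. Then there is a nonempty
subset `Ω' ⊆ ι` such that the restriction of `f` to `Ω'` sums to `a` and this sum is
reduced: for every nonempty subset `S ⊆ Ω'`, the subsum `∑_{i ∈ S} f i` (which converges,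
since subfamilies of summable families in complete groups are summable) is nonzero. -/
theorem exists_reduced_subsum
    {G : Type*} [AddCommGroup G] [UniformSpace G] [IsUniformAddGroup G]
    [T2Space G] [CompleteSpace G]
    {ι : Type*} (f : ι → G) (a : G)
    (hf : HasSum f a) (ha : a ≠ 0) :
    ∃ Ω' : Set ι, Ω'.Nonempty ∧
      HasSum (fun i : Ω' => f i) a ∧
      ∀ S : Set ι, S ⊆ Ω' → S.Nonempty → ∑' i : S, f i ≠ 0 := by
  classical
  -- the collection of zero-sum subsets
  set 𝒮 : Set (Set ι) := {s | HasSum (f ∘ ((↑) : s → ι)) 0} with h𝒮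
  have hzorn : ∃ M, Maximal (· ∈ 𝒮) M := by
    apply zorn_subset
    intro c hc hchain
    rcases c.eq_empty_or_nonempty with rfl | hne
    · exact ⟨∅, by simpa [h𝒮] using hasSum_empty, by simp⟩
    · exact ⟨⋃₀ c, chain_sUnion_hasSum_zero hf.summable hchain hne (fun s hs => hc hs),
        fun s hs => Set.subset_sUnion_of_mem hs⟩
  obtain ⟨M, hM⟩ := hzorn
  have hM0 : HasSum (f ∘ ((↑) : M → ι)) 0 := hM.prop
  refine ⟨Mᶜ, ?_, ?_, ?_⟩
  case refine_2 =>
    -- sum over complement is a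
    -- need HasSum on Mᶜ
    have hcs : Summable (f ∘ ((↑) : ↥Mᶜ → ι)) := hf.summable.subtype Mᶜ
    obtain ⟨b, hb⟩ := hcs
    have : HasSum f (0 + b) := hM0.add_compl hb
    rw [zero_add] at this
    have hab : a = b := hf.unique this
    exact hab ▸ hb
  case refine_1 =>
    by_contra h
    rw [Set.not_nonempty_iff_eq_empty] at h
    have hcs : Summable (f ∘ ((↑) : ↥Mᶜ → ι)) := hf.summable.subtype Mᶜ
    obtain ⟨b, hb⟩ := hcs
    have : HasSum f (0 + b) := hM0.add_compl hb
    rw [zero_add] at this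
    have hab : a = b := hf.unique this
    have : IsEmpty ↥Mᶜ := by rw [h]; infer_instance
    have hb0 : b = 0 := hb.unique hasSum_empty
    exact ha (hab ▸ hb0)
  case refine_3 =>
    intro S hSΩ hSne hS0
    have hsummS : Summable (f ∘ ((↑) : S → ι)) := hf.summable.subtype S
    have hS : HasSum (f ∘ ((↑) : S → ι)) 0 := by
      have := hsummS.hasSum
      rwa [show ∑' i : S, (f ∘ ((↑) : S → ι)) i = 0 from hS0] at this
    have hdisj : Disjoint M S := by
      rw [Set.disjoint_left]
      intro i hiM hiS
      exact (hSΩ hiS) hiM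
    have hunion : HasSum (f ∘ ((↑) : ↥(M ∪ S) → ι)) 0 := by
      have := hM0.add_disjoint hdisj hS
      rwa [zero_add] at this
    have hMS : M ∪ S ⊆ M := hM.2 hunion Set.subset_union_left
    obtain ⟨i, hi⟩ := hSne
    exact (hSΩ hi) (hMS (Set.mem_union_right M hi))
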